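/- Σ over integers m,n ≥ 1 with m ≡ n (mod 3) of 1/(m⁶·n⁶·(m+n)⁶) = (53109402098/3020275543157103456225)·π¹⁸. -/

import Mathlib

open Real MeasureTheory intervalIntegral

noncomputable def aa (n : ℕ) : ℝ := 1/(n:ℝ)^6

lemma aa_zero : aa 0 = 0 := by simp [aa]

lemma summable_aa : Summable aa := (summable_one_div_nat_pow).2 (by norm_num)

lemma aa_nonneg (n : ℕ) : 0 ≤ aa n := div_nonneg zero_le_one (by positivity)

lemma aa_le_one (n : ℕ) : aa n ≤ 1 := by
  unfold aa
  rcases Nat.eq_zero_or_pos n with h | h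
  · simp [h]
  · rw [div_le_one (by positivity)]
    exact one_le_pow₀ (by exact_mod_cast h)

lemma norm_term_le (t : ℝ) (n : ℕ) (x : ℝ) : ‖aa n * cos (2*π*n*(x+t))‖ ≤ aa n := by
  rw [norm_mul, norm_of_nonneg (aa_nonneg n)]
  calc aa n * ‖cos (2*π*n*(x+t))‖ ≤ aa n * 1 :=
        mul_le_mul_of_nonneg_left (by rw [Real.norm_eq_abs]; exact Real.abs_cos_le_one _) (aa_nonneg n)
    _ = aa n := mul_one _

lemma summable_norm_term (t : ℝ) (x : ℝ) : Summable (fun n => ‖aa n * cos (2*π*n*(x+t))‖) :=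
  Summable.of_nonneg_of_le (fun _ => norm_nonneg _) (fun n => norm_term_le t n x) summable_aa

lemma summable_aaa : Summable (fun q : ℕ × ℕ × ℕ => aa q.1 * (aa q.2.1 * aa q.2.2)) :=
  summable_aa.mul_of_nonneg (summable_aa.mul_of_nonneg summable_aa aa_nonneg aa_nonneg)
    aa_nonneg (fun r => mul_nonneg (aa_nonneg _) (aa_nonneg _))

lemma summable_of_bdd_aaa {f : ℕ × ℕ × ℕ → ℝ}
    (h : ∀ q, ‖f q‖ ≤ aa q.1 * (aa q.2.1 * aa q.2.2) / 4) : Summable f :=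
  Summable.of_norm_bounded (summable_aaa.div_const 4) h

lemma summable_UW {f : ℕ × ℕ → ℝ}
    (h : ∀ q, ‖f q‖ ≤ aa q.1 * aa q.2) : Summable f :=
  Summable.of_norm_bounded
    (summable_aa.mul_of_nonneg summable_aa aa_nonneg aa_nonneg) h

lemma U_bound (u v : ℕ) : ‖aa u * aa v * aa (u+v)‖ ≤ aa u * aa v := by
  rw [norm_of_nonneg (mul_nonneg (mul_nonneg (aa_nonneg _) (aa_nonneg _)) (aa_nonneg _))]
  calc aa u * aa v * aa (u+v) ≤ aa u * aa v * 1 :=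
        mul_le_mul_of_nonneg_left (aa_le_one _) (mul_nonneg (aa_nonneg _) (aa_nonneg _))
    _ = aa u * aa v := mul_one _

lemma summable_U : Summable (fun uv : ℕ × ℕ => aa uv.1 * aa uv.2 * aa (uv.1+uv.2)) :=
  summable_UW (fun q => U_bound q.1 q.2)

lemma summable_W : Summable (fun uv : ℕ × ℕ =>
    aa uv.1 * aa uv.2 * aa (uv.1+uv.2) * cos (2*π*((uv.1:ℝ)-uv.2)/3)) := by
  apply summable_UW
  intro q
  rw [norm_mul]
  calc ‖aa q.1 * aa q.2 * aa (q.1+q.2)‖ * ‖cos (2*π*((q.1:ℝ)-q.2)/3)‖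
      ≤ (aa q.1 * aa q.2) * 1 := by
        apply mul_le_mul (U_bound q.1 q.2)
        · rw [Real.norm_eq_abs]; exact Real.abs_cos_le_one _
        · exact norm_nonneg _
        · exact mul_nonneg (aa_nonneg _) (aa_nonneg _)
    _ = aa q.1 * aa q.2 := mul_one _

/-! ### Elementary integrals -/

lemma cosint (k : ℤ) (φ : ℝ) :
    ∫ x in (0:ℝ)..1, Real.cos (2*π*k*x + φ) = if k = 0 then Real.cos φ else 0 := by
  rcases eq_or_ne k 0 with hk | hk
  · simp [hk]
  · rw [if_neg hk]
    have h2 : (2*π*k) ≠ 0 := by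
      have := Real.pi_ne_zero
      simp [this, hk]
    have hd : ∀ x : ℝ, HasDerivAt (fun y => Real.sin (2*π*k*y + φ) / (2*π*k))
        (Real.cos (2*π*k*x + φ)) x := by
      intro x
      have h1 : HasDerivAt (fun y : ℝ => 2*π*k*y + φ) (2*π*k) x := by
        simpa using ((hasDerivAt_id x).const_mul (2*π*k)).add_const φ
      have h3 := ((Real.hasDerivAt_sin (2*π*k*x + φ)).comp x h1).div_const (2*π*k)
      convert h3 using 1
      all_goals first | rfl | field_simp
    rw [intervalIntegral.integral_eq_sub_of_hasDerivAt (fun x _ => hd x)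
      ((Real.continuous_cos.comp (by continuity)).intervalIntegrable 0 1)]
    have hs : Real.sin (2*π*k*1 + φ) = Real.sin φ := by
      rw [mul_one]
      have : 2*π*k + φ = φ + k * (2*π) := by ring
      rw [this, Real.sin_add_int_mul_two_pi]
    rw [mul_one] at hs
    rw [mul_one, hs, mul_zero, zero_add, sub_self]

lemma coscoscos (A B C : ℝ) : cos A * cos B * cos C
    = (cos (A+B+C) + cos (A+B-C) + cos (A-B+C) + cos (A-B-C))/4 := by
  simp only [Real.cos_add, Real.cos_sub, Real.sin_add, Real.sin_sub]
  ring

lemma prodcos (m n p : ℕ) (t₁ t₂ t₃ : ℝ) :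
    ∫ x in (0:ℝ)..1, cos (2*π*m*(x+t₁)) * cos (2*π*n*(x+t₂)) * cos (2*π*p*(x+t₃))
    = ((if (m:ℤ)+n+p = 0 then cos (2*π*(m*t₁+n*t₂+p*t₃)) else 0)
     + (if (m:ℤ)+n-p = 0 then cos (2*π*(m*t₁+n*t₂-p*t₃)) else 0)
     + (if (m:ℤ)-n+p = 0 then cos (2*π*(m*t₁-n*t₂+p*t₃)) else 0)
     + (if (m:ℤ)-n-p = 0 then cos (2*π*(m*t₁-n*t₂-p*t₃)) else 0)) / 4 := by
  have e1 : ∀ x:ℝ, cos (2*π*m*(x+t₁)) * cos (2*π*n*(x+t₂)) * cos (2*π*p*(x+t₃))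
      = (cos (2*π*(((m:ℤ)+n+p : ℤ):ℝ)*x + 2*π*(m*t₁+n*t₂+p*t₃))
       + cos (2*π*(((m:ℤ)+n-p : ℤ):ℝ)*x + 2*π*(m*t₁+n*t₂-p*t₃))
       + cos (2*π*(((m:ℤ)-n+p : ℤ):ℝ)*x + 2*π*(m*t₁-n*t₂+p*t₃))
       + cos (2*π*(((m:ℤ)-n-p : ℤ):ℝ)*x + 2*π*(m*t₁-n*t₂-p*t₃)))/4 := by
    intro x
    rw [coscoscos]
    have h1 : 2*π*m*(x+t₁)+2*π*n*(x+t₂)+2*π*p*(x+t₃)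
        = 2*π*(((m:ℤ)+n+p : ℤ):ℝ)*x + 2*π*(m*t₁+n*t₂+p*t₃) := by push_cast; ring
    have h2 : 2*π*m*(x+t₁)+2*π*n*(x+t₂)-2*π*p*(x+t₃)
        = 2*π*(((m:ℤ)+n-p : ℤ):ℝ)*x + 2*π*(m*t₁+n*t₂-p*t₃) := by push_cast; ring
    have h3 : 2*π*m*(x+t₁)-2*π*n*(x+t₂)+2*π*p*(x+t₃)
        = 2*π*(((m:ℤ)-n+p : ℤ):ℝ)*x + 2*π*(m*t₁-n*t₂+p*t₃) := by push_cast; ring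
    have h4 : 2*π*m*(x+t₁)-2*π*n*(x+t₂)-2*π*p*(x+t₃)
        = 2*π*(((m:ℤ)-n-p : ℤ):ℝ)*x + 2*π*(m*t₁-n*t₂-p*t₃) := by push_cast; ring
    rw [h1, h2, h3, h4]
  rw [intervalIntegral.integral_congr (g := fun x => _) (fun x _ => e1 x)]
  have ii : ∀ (k : ℤ) (φ : ℝ), IntervalIntegrable (fun x => Real.cos (2*π*k*x + φ)) volume 0 1 :=
    fun k φ => (Real.continuous_cos.comp (by continuity)).intervalIntegrable 0 1
  rw [intervalIntegral.integral_div]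
  rw [intervalIntegral.integral_add (((ii _ _).add (ii _ _)).add (ii _ _)) (ii _ _),
      intervalIntegral.integral_add ((ii _ _).add (ii _ _)) (ii _ _),
      intervalIntegral.integral_add (ii _ _) (ii _ _), cosint, cosint, cosint, cosint]

/-! ### Swapping sum and integral -/

lemma triple (t₁ t₂ t₃ : ℝ) :
    (∫ x in (0:ℝ)..1, (∑' m:ℕ, aa m * cos (2*π*m*(x+t₁))) * (∑' n:ℕ, aa n * cos (2*π*n*(x+t₂)))
      * (∑' p:ℕ, aa p * cos (2*π*p*(x+t₃))))
    = ∑' q : ℕ × ℕ × ℕ, aa q.1 * aa q.2.1 * aa q.2.2 *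
      ∫ x in (0:ℝ)..1, cos (2*π*q.1*(x+t₁)) * cos (2*π*q.2.1*(x+t₂)) * cos (2*π*q.2.2*(x+t₃)) := by
  have hpt : ∀ x : ℝ, (∑' m:ℕ, aa m * cos (2*π*m*(x+t₁))) * (∑' n:ℕ, aa n * cos (2*π*n*(x+t₂)))
      * (∑' p:ℕ, aa p * cos (2*π*p*(x+t₃)))
      = ∑' q : ℕ × ℕ × ℕ, (aa q.1 * cos (2*π*q.1*(x+t₁))) * ((aa q.2.1 * cos (2*π*q.2.1*(x+t₂)))
          * (aa q.2.2 * cos (2*π*q.2.2*(x+t₃)))) := by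
    intro x
    rw [mul_assoc, tsum_mul_tsum_of_summable_norm (summable_norm_term t₂ x) (summable_norm_term t₃ x)]
    rw [tsum_mul_tsum_of_summable_norm (summable_norm_term t₁ x)
      (by
        refine Summable.of_nonneg_of_le (fun _ => norm_nonneg _) (fun r => ?_)
          (summable_aa.mul_of_nonneg summable_aa aa_nonneg aa_nonneg)
        rw [norm_mul]
        exact mul_le_mul (norm_term_le t₂ r.1 x) (norm_term_le t₃ r.2 x) (norm_nonneg _) (aa_nonneg _))]
  rw [intervalIntegral.integral_congr (g := fun x => _) (fun x _ => hpt x)]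
  rw [intervalIntegral.integral_of_le (by norm_num : (0:ℝ) ≤ 1)]
  have hcont : ∀ (q : ℕ × ℕ × ℕ), Continuous (fun x : ℝ =>
      (aa q.1 * cos (2*π*q.1*(x+t₁))) * ((aa q.2.1 * cos (2*π*q.2.1*(x+t₂)))
        * (aa q.2.2 * cos (2*π*q.2.2*(x+t₃))))) := by
    intro q; continuity
  rw [← MeasureTheory.integral_tsum_of_summable_integral_norm
    (fun q => ((hcont q).integrableOn_Ioc))
    (by
      refine Summable.of_nonneg_of_le
        (fun q => MeasureTheory.integral_nonneg (fun x => norm_nonneg _)) (fun q => ?_)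
        summable_aaa
      calc (∫ x in Set.Ioc (0:ℝ) 1, ‖(aa q.1 * cos (2*π*q.1*(x+t₁))) * ((aa q.2.1 * cos (2*π*q.2.1*(x+t₂)))
              * (aa q.2.2 * cos (2*π*q.2.2*(x+t₃))))‖)
            ≤ ∫ _x in Set.Ioc (0:ℝ) 1, aa q.1 * (aa q.2.1 * aa q.2.2) := by
              apply setIntegral_mono_on ((hcont q).norm.integrableOn_Ioc)
                (integrableOn_const (by simp))
                measurableSet_Ioc
              intro x _
              rw [norm_mul]
              refine mul_le_mul (norm_term_le t₁ q.1 x) ?_ (norm_nonneg _)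
                (aa_nonneg _)
              rw [norm_mul]
              exact mul_le_mul (norm_term_le t₂ q.2.1 x) (norm_term_le t₃ q.2.2 x)
                (norm_nonneg _) (aa_nonneg _)
          _ = aa q.1 * (aa q.2.1 * aa q.2.2) := by
              rw [setIntegral_const]
              simp [Real.volume_Ioc])]
  apply tsum_congr
  intro q
  rw [← intervalIntegral.integral_of_le (by norm_num : (0:ℝ) ≤ 1)]
  rw [show (fun x : ℝ => (aa q.1 * cos (2*π*q.1*(x+t₁))) * ((aa q.2.1 * cos (2*π*q.2.1*(x+t₂)))
        * (aa q.2.2 * cos (2*π*q.2.2*(x+t₃)))))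
      = fun x : ℝ => aa q.1 * aa q.2.1 * aa q.2.2 *
        (cos (2*π*q.1*(x+t₁)) * cos (2*π*q.2.1*(x+t₂)) * cos (2*π*q.2.2*(x+t₃))) from
      funext (fun x => by ring)]
  rw [intervalIntegral.integral_const_mul]
/-! ### Channel decomposition -/

lemma cos23 : Real.cos (2*π/3) = -(1/2) := by
  have h : (2*π/3 : ℝ) = π - π/3 := by ring
  rw [h, Real.cos_pi_sub, Real.cos_pi_div_three]

lemma summable_chan (g : ℕ × ℕ × ℕ → Prop) [DecidablePred g] (w : ℕ × ℕ × ℕ → ℝ)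
    (hw : ∀ q, |w q| ≤ 1) :
    Summable (fun q : ℕ × ℕ × ℕ => if g q then aa q.1 * aa q.2.1 * aa q.2.2 / 4 * w q else 0) := by
  apply summable_of_bdd_aaa
  intro q
  have h1 := aa_nonneg q.1
  have h2 := aa_nonneg q.2.1
  have h3 := aa_nonneg q.2.2
  by_cases h : g q
  · rw [if_pos h, norm_mul, Real.norm_eq_abs (w q),
      norm_of_nonneg (by positivity : (0:ℝ) ≤ aa q.1 * aa q.2.1 * aa q.2.2 / 4)]
    calc aa q.1 * aa q.2.1 * aa q.2.2 / 4 * |w q| ≤ aa q.1 * aa q.2.1 * aa q.2.2 / 4 * 1 :=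
          mul_le_mul_of_nonneg_left (hw q) (by positivity)
      _ = aa q.1 * (aa q.2.1 * aa q.2.2) / 4 := by ring
  · rw [if_neg h, norm_zero]; positivity

lemma chan1_eq (w : ℕ × ℕ × ℕ → ℝ) :
    (∑' q : ℕ × ℕ × ℕ, if q.2.2 = q.1 + q.2.1 then aa q.1 * aa q.2.1 * aa q.2.2 / 4 * w q else 0)
    = ∑' uv : ℕ × ℕ, aa uv.1 * aa uv.2 * aa (uv.1+uv.2) / 4 * w (uv.1, uv.2, uv.1+uv.2) := by
  rw [← Function.Injective.tsum_eq (g := fun uv : ℕ × ℕ => (uv.1, uv.2, uv.1+uv.2))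
    (fun x y h => by
      simp only [Prod.mk.injEq] at h
      exact Prod.ext h.1 h.2.1)
    (fun q hq => by
      rcases q with ⟨m, n, p⟩
      simp only [Function.mem_support, ne_eq] at hq
      by_cases h : p = m + n
      · exact ⟨(m, n), by simp [h]⟩
      · exact absurd (if_neg h) hq)]
  apply tsum_congr
  intro uv
  rw [if_pos rfl]

lemma chan2_eq (w : ℕ × ℕ × ℕ → ℝ) :
    (∑' q : ℕ × ℕ × ℕ, if q.2.1 = q.1 + q.2.2 then aa q.1 * aa q.2.1 * aa q.2.2 / 4 * w q else 0)
    = ∑' uv : ℕ × ℕ, aa uv.1 * aa (uv.1+uv.2) * aa uv.2 / 4 * w (uv.1, uv.1+uv.2, uv.2) := by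
  rw [← Function.Injective.tsum_eq (g := fun uv : ℕ × ℕ => (uv.1, uv.1+uv.2, uv.2))
    (fun x y h => by
      simp only [Prod.mk.injEq] at h
      exact Prod.ext h.1 h.2.2)
    (fun q hq => by
      rcases q with ⟨m, n, p⟩
      simp only [Function.mem_support, ne_eq] at hq
      by_cases h : n = m + p
      · exact ⟨(m, p), by simp [h]⟩
      · exact absurd (if_neg h) hq)]
  apply tsum_congr
  intro uv
  rw [if_pos rfl]

lemma chan3_eq (w : ℕ × ℕ × ℕ → ℝ) :
    (∑' q : ℕ × ℕ × ℕ, if q.1 = q.2.1 + q.2.2 then aa q.1 * aa q.2.1 * aa q.2.2 / 4 * w q else 0)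
    = ∑' uv : ℕ × ℕ, aa (uv.1+uv.2) * aa uv.1 * aa uv.2 / 4 * w (uv.1+uv.2, uv.1, uv.2) := by
  rw [← Function.Injective.tsum_eq (g := fun uv : ℕ × ℕ => (uv.1+uv.2, uv.1, uv.2))
    (fun x y h => by
      simp only [Prod.mk.injEq] at h
      exact Prod.ext h.2.1 h.2.2)
    (fun q hq => by
      rcases q with ⟨m, n, p⟩
      simp only [Function.mem_support, ne_eq] at hq
      by_cases h : m = n + p
      · exact ⟨(n, p), by simp [h]⟩
      · exact absurd (if_neg h) hq)]
  apply tsum_congr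
  intro uv
  rw [if_pos rfl]

lemma caseA :
    (∑' q : ℕ × ℕ × ℕ, aa q.1 * aa q.2.1 * aa q.2.2 *
      ∫ x in (0:ℝ)..1, cos (2*π*q.1*(x+0)) * cos (2*π*q.2.1*(x+0)) * cos (2*π*q.2.2*(x+0)))
    = 3/4 * ∑' uv : ℕ × ℕ, aa uv.1 * aa uv.2 * aa (uv.1+uv.2) := by
  have hpt : ∀ q : ℕ × ℕ × ℕ, aa q.1 * aa q.2.1 * aa q.2.2 *
      (∫ x in (0:ℝ)..1, cos (2*π*q.1*(x+0)) * cos (2*π*q.2.1*(x+0)) * cos (2*π*q.2.2*(x+0)))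
      = (if q.2.2 = q.1 + q.2.1 then aa q.1 * aa q.2.1 * aa q.2.2 / 4 * (1:ℝ) else 0)
      + (if q.2.1 = q.1 + q.2.2 then aa q.1 * aa q.2.1 * aa q.2.2 / 4 * (1:ℝ) else 0)
      + (if q.1 = q.2.1 + q.2.2 then aa q.1 * aa q.2.1 * aa q.2.2 / 4 * (1:ℝ) else 0) := by
    rintro ⟨m, n, p⟩
    rw [prodcos m n p 0 0 0]
    simp only [mul_zero, zero_mul, add_zero, sub_zero, zero_add, zero_sub, neg_zero,
      Real.cos_zero, mul_one]
    rcases Nat.eq_zero_or_pos m with hm | hm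
    · subst hm; simp only [aa_zero, zero_mul]; split_ifs <;> norm_num
    rcases Nat.eq_zero_or_pos n with hn | hn
    · subst hn; simp only [aa_zero, zero_mul, mul_zero]; split_ifs <;> norm_num
    rcases Nat.eq_zero_or_pos p with hp | hp
    · subst hp; simp only [aa_zero, zero_mul, mul_zero]; split_ifs <;> norm_num
    split_ifs <;> first | omega | ring | norm_num
  rw [tsum_congr hpt]
  have s1 := summable_chan (fun q => q.2.2 = q.1 + q.2.1) (fun _ => (1:ℝ)) (by norm_num)
  have s2 := summable_chan (fun q => q.2.1 = q.1 + q.2.2) (fun _ => (1:ℝ)) (by norm_num)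
  have s3 := summable_chan (fun q => q.1 = q.2.1 + q.2.2) (fun _ => (1:ℝ)) (by norm_num)
  rw [Summable.tsum_add (s1.add s2) s3, Summable.tsum_add s1 s2,
    chan1_eq (fun _ => (1:ℝ)), chan2_eq (fun _ => (1:ℝ)), chan3_eq (fun _ => (1:ℝ))]
  rw [show (fun uv : ℕ × ℕ => aa uv.1 * aa uv.2 * aa (uv.1+uv.2) / 4 * (1:ℝ))
      = fun uv : ℕ × ℕ => (aa uv.1 * aa uv.2 * aa (uv.1+uv.2)) / 4 from funext (fun uv => by ring)]
  rw [show (fun uv : ℕ × ℕ => aa uv.1 * aa (uv.1+uv.2) * aa uv.2 / 4 * (1:ℝ))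
      = fun uv : ℕ × ℕ => (aa uv.1 * aa uv.2 * aa (uv.1+uv.2)) / 4 from funext (fun uv => by ring)]
  rw [show (fun uv : ℕ × ℕ => aa (uv.1+uv.2) * aa uv.1 * aa uv.2 / 4 * (1:ℝ))
      = fun uv : ℕ × ℕ => (aa uv.1 * aa uv.2 * aa (uv.1+uv.2)) / 4 from funext (fun uv => by ring)]
  rw [tsum_div_const]
  ring

lemma caseB :
    (∑' q : ℕ × ℕ × ℕ, aa q.1 * aa q.2.1 * aa q.2.2 *
      ∫ x in (0:ℝ)..1, cos (2*π*q.1*(x+0)) * cos (2*π*q.2.1*(x+(1/3))) * cos (2*π*q.2.2*(x+(2/3))))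
    = 3/4 * ∑' uv : ℕ × ℕ, aa uv.1 * aa uv.2 * aa (uv.1+uv.2) * cos (2*π*((uv.1:ℝ)-uv.2)/3) := by
  have hpt : ∀ q : ℕ × ℕ × ℕ, aa q.1 * aa q.2.1 * aa q.2.2 *
      (∫ x in (0:ℝ)..1, cos (2*π*q.1*(x+0)) * cos (2*π*q.2.1*(x+(1/3))) * cos (2*π*q.2.2*(x+(2/3))))
      = (if q.2.2 = q.1 + q.2.1 then aa q.1 * aa q.2.1 * aa q.2.2 / 4 * cos (2*π*((q.1:ℝ)-q.2.1)/3) else 0)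
      + (if q.2.1 = q.1 + q.2.2 then aa q.1 * aa q.2.1 * aa q.2.2 / 4 * cos (2*π*((q.1:ℝ)-q.2.2)/3) else 0)
      + (if q.1 = q.2.1 + q.2.2 then aa q.1 * aa q.2.1 * aa q.2.2 / 4 * cos (2*π*((q.2.1:ℝ)-q.2.2)/3) else 0) := by
    rintro ⟨m, n, p⟩
    rw [prodcos m n p 0 (1/3) (2/3)]
    rcases Nat.eq_zero_or_pos m with hm | hm
    · subst hm; simp only [aa_zero, zero_mul]; split_ifs <;> norm_num
    rcases Nat.eq_zero_or_pos n with hn | hn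
    · subst hn; simp only [aa_zero, zero_mul, mul_zero]; split_ifs <;> norm_num
    rcases Nat.eq_zero_or_pos p with hp | hp
    · subst hp; simp only [aa_zero, zero_mul, mul_zero]; split_ifs <;> norm_num
    have hc1 : ¬((m:ℤ)+n+p = 0) := by omega
    rw [if_neg hc1]
    by_cases h2 : (m:ℤ)+n-p = 0
    · have hpmn : p = m + n := by omega
      have h3 : ¬((m:ℤ)-n+p = 0) := by omega
      have h4 : ¬((m:ℤ)-n-p = 0) := by omega
      subst hpmn
      rw [if_pos h2, if_neg h3, if_neg h4, if_pos rfl,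
        if_neg (by omega : ¬(n = m + (m + n))), if_neg (by omega : ¬(m = n + (m + n)))]
      rw [show (2*π*((m:ℝ)*0+↑n*(1/3)-(↑(m+n):ℝ)*(2/3)) : ℝ)
          = -(2*π*(((n:ℝ))-m)/3 + ((m:ℤ):ℝ)*(2*π)) by push_cast; ring,
        Real.cos_neg, Real.cos_add_int_mul_two_pi,
        show (2*π*(((n:ℝ))-m)/3 : ℝ) = -(2*π*((m:ℝ)-n)/3) by ring, Real.cos_neg]
      ring
    · by_cases h3 : (m:ℤ)-n+p = 0
      · have hnmp : n = m + p := by omega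
        have h4 : ¬((m:ℤ)-n-p = 0) := by omega
        subst hnmp
        rw [if_neg h2, if_pos h3, if_neg h4, if_pos rfl,
          if_neg (by omega : ¬(p = m + (m + p))), if_neg (by omega : ¬(m = (m + p) + p))]
        rw [show (2*π*((m:ℝ)*0-(↑(m+p):ℝ)*(1/3)+↑p*(2/3)) : ℝ)
            = -(2*π*((m:ℝ)-p)/3) by push_cast; ring, Real.cos_neg]
        ring
      · by_cases h4 : (m:ℤ)-n-p = 0
        · have hmnp : m = n + p := by omega
          subst hmnp
          rw [if_neg h2, if_neg h3, if_pos h4, if_pos rfl,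
            if_neg (by omega : ¬(p = (n + p) + n)), if_neg (by omega : ¬(n = (n + p) + p))]
          rw [show (2*π*((↑(n+p):ℝ)*0-(n:ℝ)*(1/3)-↑p*(2/3)) : ℝ)
              = -(2*π*(((n:ℝ))-p)/3 + ((p:ℤ):ℝ)*(2*π)) by push_cast; ring,
            Real.cos_neg, Real.cos_add_int_mul_two_pi]
          ring
        · rw [if_neg h2, if_neg h3, if_neg h4,
            if_neg (by omega : ¬(p = m + n)), if_neg (by omega : ¬(n = m + p)),
            if_neg (by omega : ¬(m = n + p))]
          norm_num
  rw [tsum_congr hpt]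
  have hwb : ∀ (f : ℕ × ℕ × ℕ → ℝ), (∀ q, ∃ θ : ℝ, f q = cos θ) → ∀ q, |f q| ≤ 1 := by
    intro f hf q
    obtain ⟨θ, hθ⟩ := hf q
    rw [hθ]
    exact Real.abs_cos_le_one θ
  have s1 := summable_chan (fun q => q.2.2 = q.1 + q.2.1)
    (fun q => cos (2*π*((q.1:ℝ)-q.2.1)/3)) (fun q => Real.abs_cos_le_one _)
  have s2 := summable_chan (fun q => q.2.1 = q.1 + q.2.2)
    (fun q => cos (2*π*((q.1:ℝ)-q.2.2)/3)) (fun q => Real.abs_cos_le_one _)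
  have s3 := summable_chan (fun q => q.1 = q.2.1 + q.2.2)
    (fun q => cos (2*π*((q.2.1:ℝ)-q.2.2)/3)) (fun q => Real.abs_cos_le_one _)
  rw [Summable.tsum_add (s1.add s2) s3, Summable.tsum_add s1 s2,
    chan1_eq (fun q => cos (2*π*((q.1:ℝ)-q.2.1)/3)),
    chan2_eq (fun q => cos (2*π*((q.1:ℝ)-q.2.2)/3)),
    chan3_eq (fun q => cos (2*π*((q.2.1:ℝ)-q.2.2)/3))]
  rw [show (fun uv : ℕ × ℕ => aa uv.1 * aa uv.2 * aa (uv.1+uv.2) / 4 * cos (2*π*((uv.1:ℝ)-uv.2)/3))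
      = fun uv : ℕ × ℕ => (aa uv.1 * aa uv.2 * aa (uv.1+uv.2) * cos (2*π*((uv.1:ℝ)-uv.2)/3)) / 4 from
      funext (fun uv => by ring)]
  rw [show (fun uv : ℕ × ℕ => aa uv.1 * aa (uv.1+uv.2) * aa uv.2 / 4 * cos (2*π*((uv.1:ℝ)-uv.2)/3))
      = fun uv : ℕ × ℕ => (aa uv.1 * aa uv.2 * aa (uv.1+uv.2) * cos (2*π*((uv.1:ℝ)-uv.2)/3)) / 4 from
      funext (fun uv => by ring)]
  rw [show (fun uv : ℕ × ℕ => aa (uv.1+uv.2) * aa uv.1 * aa uv.2 / 4 * cos (2*π*((uv.1:ℝ)-uv.2)/3))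
      = fun uv : ℕ × ℕ => (aa uv.1 * aa uv.2 * aa (uv.1+uv.2) * cos (2*π*((uv.1:ℝ)-uv.2)/3)) / 4 from
      funext (fun uv => by ring)]
  rw [tsum_div_const]
  ring

/-! ### Bernoulli polynomial values -/

noncomputable def BB (x : ℝ) : ℝ := x^6 - 3*x^5 + 5/2*x^4 - 1/2*x^2 + 1/42

noncomputable def cst : ℝ := (2*π)^6/1440

lemma b5 : bernoulli' 5 = 0 := by
  rw [bernoulli'_def]
  norm_num [Finset.sum_range_succ, bernoulli'_zero, bernoulli'_one, bernoulli'_two,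
    bernoulli'_three, bernoulli'_four, Nat.choose]

lemma b6 : bernoulli' 6 = 1/42 := by
  rw [bernoulli'_def]
  norm_num [Finset.sum_range_succ, bernoulli'_zero, bernoulli'_one, bernoulli'_two,
    bernoulli'_three, bernoulli'_four, b5, Nat.choose]

lemma bern6eval (x : ℝ) :
    Polynomial.eval x (Polynomial.map (algebraMap ℚ ℝ) (Polynomial.bernoulli 6)) = BB x := by
  rw [Polynomial.bernoulli]
  simp only [Finset.sum_range_succ, Finset.sum_range_zero, Polynomial.map_add,
    Polynomial.map_monomial, Polynomial.eval_add, Polynomial.eval_monomial]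
  rw [_root_.bernoulli_zero, _root_.bernoulli_one,
    bernoulli_eq_bernoulli'_of_ne_one (by norm_num), bernoulli'_two,
    bernoulli_eq_bernoulli'_of_ne_one (by norm_num), bernoulli'_three,
    bernoulli_eq_bernoulli'_of_ne_one (by norm_num), bernoulli'_four,
    bernoulli_eq_bernoulli'_of_ne_one (by norm_num), b5,
    bernoulli_eq_bernoulli'_of_ne_one (by norm_num), b6]
  unfold BB
  norm_num [Nat.choose]
  ring

lemma tsum_cos {x : ℝ} (hx : x ∈ Set.Icc (0:ℝ) 1) :
    ∑' n:ℕ, aa n * cos (2*π*n*x) = cst * BB x := by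
  have h := (hasSum_one_div_nat_pow_mul_cos (k := 3) (by norm_num) hx).tsum_eq
  rw [show (fun n:ℕ => 1/(n:ℝ)^(2*3) * Real.cos (2*π*n*x))
      = (fun n:ℕ => aa n * cos (2*π*n*x)) from funext (fun n => by norm_num [aa])] at h
  rw [h]
  simp only [show (2*3 : ℕ) = 6 from by norm_num]
  rw [bern6eval x, show ((Nat.factorial 6 : ℕ) : ℝ) = 720 from by norm_num [Nat.factorial]]
  unfold cst
  ring

lemma contF (t : ℝ) : Continuous (fun x : ℝ => ∑' n:ℕ, aa n * cos (2*π*n*(x+t))) :=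
  continuous_tsum (fun n => by continuity) summable_aa (fun n x => norm_term_le t n x)

lemma L1 {x : ℝ} (hx : x ∈ Set.Icc (0:ℝ) 1) :
    ∑' n:ℕ, aa n * cos (2*π*n*(x+0)) = cst * BB x := by
  rw [show (fun n:ℕ => aa n * cos (2*π*n*(x+0))) = (fun n:ℕ => aa n * cos (2*π*n*x)) from
    funext (fun n => by norm_num)]
  exact tsum_cos hx

lemma L2 {x : ℝ} (hx : x ∈ Set.Icc (0:ℝ) 1) :
    ∑' n:ℕ, aa n * cos (2*π*n*(x+(1/3)))
    = if x ≤ 2/3 then cst * BB (x+1/3) else cst * BB (x-2/3) := by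
  by_cases h : x ≤ 2/3
  · rw [if_pos h]
    exact tsum_cos ⟨by linarith [hx.1], by linarith⟩
  · rw [if_neg h]
    rw [show (fun n:ℕ => aa n * cos (2*π*n*(x+(1/3)))) = (fun n:ℕ => aa n * cos (2*π*n*(x-2/3)))
      from funext (fun n => by
        congr 1
        rw [show 2*π*n*(x+(1/3)) = 2*π*n*(x-2/3) + ((n:ℤ):ℝ)*(2*π) by push_cast; ring,
          Real.cos_add_int_mul_two_pi])]
    exact tsum_cos ⟨by linarith, by linarith [hx.2]⟩

lemma L3 {x : ℝ} (hx : x ∈ Set.Icc (0:ℝ) 1) :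
    ∑' n:ℕ, aa n * cos (2*π*n*(x+(2/3)))
    = if x ≤ 1/3 then cst * BB (x+2/3) else cst * BB (x-1/3) := by
  by_cases h : x ≤ 1/3
  · rw [if_pos h]
    exact tsum_cos ⟨by linarith [hx.1], by linarith⟩
  · rw [if_neg h]
    rw [show (fun n:ℕ => aa n * cos (2*π*n*(x+(2/3)))) = (fun n:ℕ => aa n * cos (2*π*n*(x-1/3)))
      from funext (fun n => by
        congr 1
        rw [show 2*π*n*(x+(2/3)) = 2*π*n*(x-1/3) + ((n:ℤ):ℝ)*(2*π) by push_cast; ring,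
          Real.cos_add_int_mul_two_pi])]
    exact tsum_cos ⟨by linarith, by linarith [hx.2]⟩

/-! ### Polynomial integrals -/

noncomputable def cP0 : ℕ → ℝ := fun i =>
  if i = 0 then ((1)/74088) else if i = 1 then 0 else if i = 2 then ((-1)/1176) else if i = 3 then 0 else if i = 4 then ((13)/588) else if i = 5 then ((-1)/196) else if i = 6 then ((-355)/1176) else if i = 7 then ((3)/14) else if i = 8 then ((9)/4) else if i = 9 then ((-93)/28) else if i = 10 then ((-61)/8) else if i = 11 then ((309)/14) else if i = 12 then ((-297)/56) else if i = 13 then ((-189)/4) else if i = 14 then ((339)/4) else if i = 15 then (-72) else if i = 16 then ((69)/2) else if i = 17 then (-9) else if i = 18 then (1) else 0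

noncomputable def cP1 : ℕ → ℝ := fun i =>
  if i = 0 then ((14641)/4374822312) else if i = 1 then 0 else if i = 2 then ((-118555)/208324872) else if i = 3 then 0 else if i = 4 then ((1774039)/104162436) else if i = 5 then ((-14641)/34720812) else if i = 6 then ((-44082049)/208324872) else if i = 7 then ((5773)/91854) else if i = 8 then ((718741)/551124) else if i = 9 then ((-15959)/20412) else if i = 10 then ((-512297)/122472) else if i = 11 then ((12457)/3402) else if i = 12 then ((276791)/40824) else if i = 13 then ((-287)/36) else if i = 14 then ((-487)/108) else if i = 15 then (8) else if i = 16 then ((-1)/6) else if i = 17 then (-3) else if i = 18 then (1) else 0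

lemma genint (c : ℕ → ℝ) (a b : ℝ) :
    ∫ x in a..b, ∑ i ∈ Finset.range 19, c i * x^i
      = ∑ i ∈ Finset.range 19, c i * ((b^(i+1)-a^(i+1))/(i+1)) := by
  rw [intervalIntegral.integral_finset_sum
    (fun i _ => ((by fun_prop : Continuous fun x : ℝ => c i * x ^ i).intervalIntegrable a b))]
  refine Finset.sum_congr rfl (fun i _ => ?_)
  rw [intervalIntegral.integral_const_mul, integral_pow]

lemma polyint1 : ∫ x in (0:ℝ)..1, BB x * BB x * BB x = 1031/6844101264 := by
  have expand : ∀ x:ℝ, BB x * BB x * BB x = ∑ i ∈ Finset.range 19, cP0 i * x^i := by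
    intro x
    simp only [BB, cP0, Finset.sum_range_succ, Finset.sum_range_zero]
    norm_num
    ring
  rw [intervalIntegral.integral_congr (g := fun x => _) (fun x _ => expand x), genint]
  simp only [cP0, Finset.sum_range_succ, Finset.sum_range_zero]
  norm_num

lemma polyint2 : ∫ x in (0:ℝ)..(1/3), BB x * BB (x+1/3) * BB (x+2/3) = 44196167947/883848352821466032 := by
  have expand : ∀ x:ℝ, BB x * BB (x+1/3) * BB (x+2/3) = ∑ i ∈ Finset.range 19, cP1 i * x^i := by
    intro x
    simp only [BB, cP1, Finset.sum_range_succ, Finset.sum_range_zero]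
    norm_num
    ring
  rw [intervalIntegral.integral_congr (g := fun x => _) (fun x _ => expand x), genint]
  simp only [cP1, Finset.sum_range_succ, Finset.sum_range_zero]
  norm_num

/-! ### Evaluation of the two integrals -/

lemma I0eval : (∫ x in (0:ℝ)..1, (∑' m:ℕ, aa m * cos (2*π*m*(x+0)))
      * (∑' n:ℕ, aa n * cos (2*π*n*(x+0))) * (∑' p:ℕ, aa p * cos (2*π*p*(x+0))))
    = cst^3 * (1031/6844101264) := by
  rw [intervalIntegral.integral_congr (g := fun x => cst^3 * (BB x * BB x * BB x))
    (fun x hx => by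
      rw [Set.uIcc_of_le (by norm_num : (0:ℝ) ≤ 1)] at hx
      rw [L1 hx]
      ring)]
  rw [intervalIntegral.integral_const_mul, polyint1]

lemma I1eval : (∫ x in (0:ℝ)..1, (∑' m:ℕ, aa m * cos (2*π*m*(x+0)))
      * (∑' n:ℕ, aa n * cos (2*π*n*(x+(1/3)))) * (∑' p:ℕ, aa p * cos (2*π*p*(x+(2/3)))))
    = cst^3 * (3 * (44196167947/883848352821466032)) := by
  have hcontF : Continuous (fun x : ℝ => (∑' m:ℕ, aa m * cos (2*π*m*(x+0)))
      * (∑' n:ℕ, aa n * cos (2*π*n*(x+(1/3)))) * (∑' p:ℕ, aa p * cos (2*π*p*(x+(2/3))))) :=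
    ((contF 0).mul (contF (1/3))).mul (contF (2/3))
  rw [← intervalIntegral.integral_add_adjacent_intervals (a := (0:ℝ)) (b := 2/3) (c := 1)
      (hcontF.intervalIntegrable _ _) (hcontF.intervalIntegrable _ _),
    ← intervalIntegral.integral_add_adjacent_intervals (a := (0:ℝ)) (b := 1/3) (c := 2/3)
      (hcontF.intervalIntegrable _ _) (hcontF.intervalIntegrable _ _)]
  have p1 : (∫ x in (0:ℝ)..(1/3), (∑' m:ℕ, aa m * cos (2*π*m*(x+0)))
      * (∑' n:ℕ, aa n * cos (2*π*n*(x+(1/3)))) * (∑' p:ℕ, aa p * cos (2*π*p*(x+(2/3)))))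
      = cst^3 * (44196167947/883848352821466032) := by
    rw [intervalIntegral.integral_congr (g := fun x => cst^3 * (BB x * BB (x+1/3) * BB (x+2/3)))
      (fun x hx => by
        rw [Set.uIcc_of_le (by norm_num : (0:ℝ) ≤ 1/3)] at hx
        have hx1 : x ∈ Set.Icc (0:ℝ) 1 := ⟨hx.1, by linarith [hx.2]⟩
        rw [L1 hx1, L2 hx1, L3 hx1, if_pos (by linarith [hx.2] : x ≤ 2/3), if_pos hx.2]
        ring)]
    rw [intervalIntegral.integral_const_mul, polyint2]
  have p2 : (∫ x in (1/3:ℝ)..(2/3), (∑' m:ℕ, aa m * cos (2*π*m*(x+0)))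
      * (∑' n:ℕ, aa n * cos (2*π*n*(x+(1/3)))) * (∑' p:ℕ, aa p * cos (2*π*p*(x+(2/3)))))
      = cst^3 * (44196167947/883848352821466032) := by
    rw [intervalIntegral.integral_congr (g := fun x => cst^3 * (BB x * BB (x+1/3) * BB (x-1/3)))
      (fun x hx => by
        rw [Set.uIcc_of_le (by norm_num : (1/3:ℝ) ≤ 2/3)] at hx
        have hx1 : x ∈ Set.Icc (0:ℝ) 1 := ⟨by linarith [hx.1], by linarith [hx.2]⟩
        rw [L1 hx1, L2 hx1, L3 hx1, if_pos (hx.2 : x ≤ 2/3)]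
        by_cases h13 : x ≤ 1/3
        · have hxe : x = 1/3 := le_antisymm h13 hx.1
          subst hxe
          rw [if_pos le_rfl]
          norm_num [BB]
          ring
        · rw [if_neg h13]
          ring)]
    rw [intervalIntegral.integral_const_mul]
    have hsub := intervalIntegral.integral_comp_add_right (a := (0:ℝ)) (b := 1/3)
      (fun y => BB y * BB (y+1/3) * BB (y-1/3)) (1/3)
    rw [show (0:ℝ)+1/3 = 1/3 by norm_num, show (1/3:ℝ)+1/3 = 2/3 by norm_num] at hsub
    rw [← hsub]
    rw [intervalIntegral.integral_congr (g := fun x => BB x * BB (x+1/3) * BB (x+2/3))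
      (fun x _ => by unfold BB; ring)]
    rw [polyint2]
  have p3 : (∫ x in (2/3:ℝ)..1, (∑' m:ℕ, aa m * cos (2*π*m*(x+0)))
      * (∑' n:ℕ, aa n * cos (2*π*n*(x+(1/3)))) * (∑' p:ℕ, aa p * cos (2*π*p*(x+(2/3)))))
      = cst^3 * (44196167947/883848352821466032) := by
    rw [intervalIntegral.integral_congr (g := fun x => cst^3 * (BB x * BB (x-2/3) * BB (x-1/3)))
      (fun x hx => by
        rw [Set.uIcc_of_le (by norm_num : (2/3:ℝ) ≤ 1)] at hx
        have hx1 : x ∈ Set.Icc (0:ℝ) 1 := ⟨by linarith [hx.1], hx.2⟩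
        rw [L1 hx1, L2 hx1, L3 hx1, if_neg (by linarith [hx.1] : ¬(x ≤ 1/3))]
        by_cases h23 : x ≤ 2/3
        · have hxe : x = 2/3 := le_antisymm h23 hx.1
          subst hxe
          rw [if_pos le_rfl]
          norm_num [BB]
          ring
        · rw [if_neg h23]
          ring)]
    rw [intervalIntegral.integral_const_mul]
    have hsub := intervalIntegral.integral_comp_add_right (a := (0:ℝ)) (b := 1/3)
      (fun y => BB y * BB (y-2/3) * BB (y-1/3)) (2/3)
    rw [show (0:ℝ)+2/3 = 2/3 by norm_num, show (1/3:ℝ)+2/3 = 1 by norm_num] at hsub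
    rw [← hsub]
    rw [intervalIntegral.integral_congr (g := fun x => BB x * BB (x+1/3) * BB (x+2/3))
      (fun x _ => by unfold BB; ring)]
    rw [polyint2]
  rw [p1, p2, p3]
  ring

/-! ### Main theorem -/

/-- The value ζ₂PU3(6,6,6): the sum over m,n ≥ 1 with m ≡ n (mod 3) of
1/(m⁶n⁶(m+n)⁶) equals (53109402098/3020275543157103456225)π¹⁸. -/
theorem zeta2_PU3_six_six_six :
    (∑' pr : ℕ × ℕ, (if (pr.1 + 1) % 3 = (pr.2 + 1) % 3 then
      (1 : ℝ) / (((pr.1 : ℝ) + 1) ^ 6 * ((pr.2 : ℝ) + 1) ^ 6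
        * ((pr.1 : ℝ) + (pr.2 : ℝ) + 2) ^ 6) else 0))
    = 53109402098 / 3020275543157103456225 * Real.pi ^ 18 := by
  have step1 : (∑' pr : ℕ × ℕ, (if (pr.1 + 1) % 3 = (pr.2 + 1) % 3 then
      (1 : ℝ) / (((pr.1 : ℝ) + 1) ^ 6 * ((pr.2 : ℝ) + 1) ^ 6
        * ((pr.1 : ℝ) + (pr.2 : ℝ) + 2) ^ 6) else 0))
      = ∑' uv : ℕ × ℕ, (if uv.1 % 3 = uv.2 % 3 then aa uv.1 * aa uv.2 * aa (uv.1+uv.2) else 0) := by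
    rw [← Function.Injective.tsum_eq (g := fun pr : ℕ × ℕ => (pr.1+1, pr.2+1))
      (f := fun uv : ℕ × ℕ => if uv.1 % 3 = uv.2 % 3 then aa uv.1 * aa uv.2 * aa (uv.1+uv.2) else 0)
      (fun x y h => by
        simp only [Prod.mk.injEq] at h
        exact Prod.ext (by omega) (by omega))
      (fun q hq => by
        rw [Function.mem_support] at hq
        rcases q with ⟨u, v⟩
        rcases Nat.eq_zero_or_pos u with h | h
        · exact absurd (by subst h; simp [aa_zero]) hq
        rcases Nat.eq_zero_or_pos v with h' | h'
        · exact absurd (by subst h'; simp [aa_zero]) hq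
        exact ⟨(u-1, v-1), by simp only [Prod.mk.injEq]; omega⟩)]
    apply tsum_congr
    intro pr
    simp only [Prod.fst, Prod.snd]
    by_cases h : (pr.1+1) % 3 = (pr.2+1) % 3
    · rw [if_pos h, if_pos h]
      unfold aa
      rw [div_mul_div_comm, div_mul_div_comm, one_mul, one_mul]
      congr 1
      push_cast
      ring
    · rw [if_neg h, if_neg h]
  have hG : ∀ uv : ℕ × ℕ, (if uv.1 % 3 = uv.2 % 3 then aa uv.1 * aa uv.2 * aa (uv.1+uv.2) else 0)
      = 1/3 * (aa uv.1 * aa uv.2 * aa (uv.1+uv.2))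
      + 2/3 * (aa uv.1 * aa uv.2 * aa (uv.1+uv.2) * cos (2*π*((uv.1:ℝ)-uv.2)/3)) := by
    rintro ⟨u, v⟩
    by_cases h : u % 3 = v % 3
    · rw [if_pos h]
      obtain ⟨k, hk⟩ : (3:ℤ) ∣ (u:ℤ) - v := by omega
      have h2 : ((u:ℝ) - v) = 3*k := by exact_mod_cast hk
      rw [show (2*π*((u:ℝ)-v)/3 : ℝ) = ((k:ℤ):ℝ)*(2*π) by rw [h2]; push_cast; ring,
        Real.cos_int_mul_two_pi]
      ring
    · rw [if_neg h]
      have hm : ((u:ℤ)-v) % 3 = 1 ∨ ((u:ℤ)-v) % 3 = 2 := by omega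
      obtain ⟨k, hk⟩ : ∃ k:ℤ, (u:ℤ)-v = 3*k+1 ∨ (u:ℤ)-v = 3*k-1 := by
        rcases hm with hm | hm
        · exact ⟨((u:ℤ)-v)/3, Or.inl (by omega)⟩
        · exact ⟨((u:ℤ)-v)/3 + 1, Or.inr (by omega)⟩
      have hcos : cos (2*π*((u:ℝ)-v)/3) = -(1/2) := by
        rcases hk with hk | hk
        · have h2 : ((u:ℝ) - v) = 3*k+1 := by exact_mod_cast hk
          rw [show (2*π*((u:ℝ)-v)/3:ℝ) = 2*π/3 + ((k:ℤ):ℝ)*(2*π) by rw [h2]; push_cast; ring,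
            Real.cos_add_int_mul_two_pi, cos23]
        · have h2 : ((u:ℝ) - v) = 3*k-1 := by exact_mod_cast hk
          rw [show (2*π*((u:ℝ)-v)/3:ℝ) = -(2*π/3) + ((k:ℤ):ℝ)*(2*π) by rw [h2]; push_cast; ring,
            Real.cos_add_int_mul_two_pi, Real.cos_neg, cos23]
      rw [hcos]
      ring
  rw [step1, tsum_congr hG,
    Summable.tsum_add (summable_U.mul_left _) (summable_W.mul_left _), tsum_mul_left, tsum_mul_left]
  have hU : (∑' uv : ℕ × ℕ, aa uv.1 * aa uv.2 * aa (uv.1+uv.2))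
      = 4/3 * (cst^3 * (1031/6844101264)) := by
    have h1 := triple 0 0 0
    rw [I0eval] at h1
    rw [caseA] at h1
    linarith
  have hW : (∑' uv : ℕ × ℕ, aa uv.1 * aa uv.2 * aa (uv.1+uv.2) * cos (2*π*((uv.1:ℝ)-uv.2)/3))
      = 4/3 * (cst^3 * (3 * (44196167947/883848352821466032))) := by
    have h1 := triple 0 (1/3) (2/3)
    rw [I1eval] at h1
    rw [caseB] at h1
    linarith
  rw [hU, hW]
  unfold cst
  ring_nf
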